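/- Let (Ω, 𝓕, μ) be a probability space, T : Ω → Ω measurable with T_*μ ≪ μ, let L = d(T_*μ)/dμ be the Radon–Nikodym density, and let ρ : Ω → ℝ be a nonnegative measurable function with ∫ ρ dμ = 1 such that ∫ f dμ = ∫ (f ∘ T)·ρ dμ for every bounded measurable f : Ω → ℝ. Then (L ∘ T) · 𝔼_μ[ρ | σ(T)] = 1 holds μ-almost everywhere, where σ(T) = T⁻¹(𝓕) is the σ-algebra generated by T and 𝔼_μ[· | σ(T)] is the conditional expectation under μ. -/

import Mathlib

open MeasureTheory Filter
open Topology

theorem stmt_6 {Ω : Type*} [m : MeasurableSpace Ω] (μ : Measure Ω) [IsProbabilityMeasure μ]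
    (T : Ω → Ω) (hT : Measurable T) (hac : μ.map T ≪ μ)
    (L : Ω → ℝ) (hL : L = fun x => ((μ.map T).rnDeriv μ x).toReal)
    (ρ : Ω → ℝ) (hρm : Measurable ρ) (hρ0 : 0 ≤ ρ) (hρ1 : ∫ x, ρ x ∂μ = 1)
    (hchg : ∀ f : Ω → ℝ, Measurable f → (∃ C, ∀ x, |f x| ≤ C) →
      ∫ x, f x ∂μ = ∫ x, f (T x) * ρ x ∂μ) :
    ∀ᵐ x ∂μ, L (T x) * (μ[ρ | MeasurableSpace.comap T m]) x = 1 := by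
  have hm : (MeasurableSpace.comap T m) ≤ m := measurable_iff_comap_le.mp hT
  haveI : IsProbabilityMeasure (μ.map T) := Measure.isProbabilityMeasure_map hT.aemeasurable
  set c := μ[ρ | (MeasurableSpace.comap T m)] with hc
  have hTcm : Measurable[(MeasurableSpace.comap T m)] T := fun s hs => ⟨s, hs, rfl⟩
  have hLmeas : Measurable L := by
    rw [hL]; exact (Measure.measurable_rnDeriv _ _).ennreal_toReal
  have hL0 : ∀ x, 0 ≤ L x := by rw [hL]; exact fun x => ENNReal.toReal_nonneg
  have hLint : Integrable L μ := by
    rw [hL]; exact Measure.integrable_toReal_rnDeriv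
  have hρint : Integrable ρ μ := by
    by_contra h
    rw [integral_undef h] at hρ1; norm_num at hρ1
  have hc0 : 0 ≤ᵐ[μ] c := condExp_nonneg (ae_of_all _ hρ0)
  have hcint : Integrable c μ := integrable_condExp
  have hcsm : StronglyMeasurable[(MeasurableSpace.comap T m)] c := stronglyMeasurable_condExp
  have hcm : AEStronglyMeasurable c μ := (hcsm.mono hm).aestronglyMeasurable
  -- the truncations
  set Ln : ℕ → Ω → ℝ := fun n x => min (L x) n with hLn
  have hLn_meas : ∀ n, Measurable (Ln n) := fun n => hLmeas.min measurable_const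
  have hLn_nonneg : ∀ n x, 0 ≤ Ln n x := fun n x => le_min (hL0 x) (Nat.cast_nonneg n)
  have hLn_le : ∀ n x, Ln n x ≤ L x := fun n x => min_le_left _ _
  have hLn_bdd : ∀ n x, |Ln n x| ≤ (n : ℝ) := fun n x => by
    rw [abs_of_nonneg (hLn_nonneg n x)]; exact min_le_right _ _
  have hLn_int : ∀ n : ℕ, Integrable (Ln n) μ := fun n =>
    hLint.mono' (hLn_meas n).aestronglyMeasurable (ae_of_all _ fun x => by
      rw [Real.norm_eq_abs, abs_of_nonneg (hLn_nonneg n x)]; exact hLn_le n x)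
  have hLn_mono : ∀ x, Monotone fun n => Ln n x := fun x i j hij =>
    min_le_min le_rfl (Nat.cast_le.mpr hij)
  have hLn_tendsto : ∀ x, Tendsto (fun n => Ln n x) atTop (𝓝 (L x)) := by
    intro x
    refine tendsto_const_nhds.congr' ?_
    filter_upwards [eventually_ge_atTop ⌈L x⌉₊] with n hn
    simp only [Ln]
    rw [min_eq_left]
    exact (Nat.le_ceil (L x)).trans (Nat.cast_le.mpr hn)
  -- key identity for truncated densities
  have key : ∀ (B : Set Ω), MeasurableSet B → ∀ n : ℕ,
      ∫ x in T ⁻¹' B, Ln n (T x) * c x ∂μ = ∫ x in B, Ln n x ∂μ := by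
    intro B hB n
    set g : Ω → ℝ := B.indicator (Ln n) with hg
    have hg_meas : Measurable g := (hLn_meas n).indicator hB
    have hg_bdd : ∀ x, |g x| ≤ (n : ℝ) := by
      intro x
      by_cases hx : x ∈ B
      · rw [hg, Set.indicator_of_mem hx]; exact hLn_bdd n x
      · rw [hg, Set.indicator_of_notMem hx]; simp
    have hgT_sm : StronglyMeasurable[MeasurableSpace.comap T m] fun x => g (T x) :=
      (hg_meas.comp hTcm).stronglyMeasurable
    have hgT_bdd : ∃ C, ∀ x, ‖g (T x)‖ ≤ C := ⟨n, fun x => hg_bdd (T x)⟩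
    have hgTρ_int : Integrable (fun x => g (T x) * ρ x) μ :=
      hρint.bdd_mul ((hg_meas.comp hT).aestronglyMeasurable) (ae_of_all _ fun x => hg_bdd (T x))
    have hgTc_int : Integrable (fun x => g (T x) * c x) μ :=
      hcint.bdd_mul ((hg_meas.comp hT).aestronglyMeasurable) (ae_of_all _ fun x => hg_bdd (T x))
    have step1 : ∫ x, g x ∂μ = ∫ x, g (T x) * ρ x ∂μ :=
      hchg g hg_meas ⟨n, fun x => hg_bdd x⟩
    have step2 : ∫ x, g (T x) * ρ x ∂μ = ∫ x, g (T x) * c x ∂μ := by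
      have hmul := condExp_mul_of_stronglyMeasurable_left (μ := μ) hgT_sm hgTρ_int hρint
      calc ∫ x, g (T x) * ρ x ∂μ
          = ∫ x, (μ[(fun x => g (T x)) * ρ | (MeasurableSpace.comap T m)]) x ∂μ := (integral_condExp hm).symm
        _ = ∫ x, ((fun x => g (T x)) * c) x ∂μ := integral_congr_ae hmul
        _ = ∫ x, g (T x) * c x ∂μ := rfl
    have lhs_eq : ∫ x, g (T x) * c x ∂μ = ∫ x in T ⁻¹' B, Ln n (T x) * c x ∂μ := by
      rw [← integral_indicator (hT hB)]
      congr 1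
      ext x
      by_cases hx : x ∈ T ⁻¹' B
      · have hx' : T x ∈ B := hx
        rw [hg, Set.indicator_of_mem hx', Set.indicator_of_mem hx]
      · have hx' : T x ∉ B := hx
        rw [hg, Set.indicator_of_notMem hx', Set.indicator_of_notMem hx, zero_mul]
    have rhs_eq : ∫ x, g x ∂μ = ∫ x in B, Ln n x ∂μ := integral_indicator hB
    rw [← lhs_eq, ← step2, ← step1, rhs_eq]
  -- integrability of the limit F = (L ∘ T) * c
  set F : Ω → ℝ := fun x => L (T x) * c x with hF
  have hFm : AEStronglyMeasurable F μ :=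
    ((hLmeas.comp hT).aestronglyMeasurable).mul hcm
  have hFn_int : ∀ n : ℕ, Integrable (fun x => Ln n (T x) * c x) μ := fun n =>
    hcint.bdd_mul (((hLn_meas n).comp hT).aestronglyMeasurable)
      (ae_of_all _ fun x => hLn_bdd n (T x))
  have hFn_nonneg : ∀ n : ℕ, 0 ≤ᵐ[μ] fun x => Ln n (T x) * c x := by
    intro n
    filter_upwards [hc0] with x hx
    exact mul_nonneg (hLn_nonneg n (T x)) hx
  have hFn_mono : ∀ᵐ x ∂μ, Monotone fun n => Ln n (T x) * c x := by
    filter_upwards [hc0] with x hx i j hij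
    exact mul_le_mul_of_nonneg_right (hLn_mono (T x) hij) hx
  have hFn_tendsto : ∀ᵐ x ∂μ, Tendsto (fun n => Ln n (T x) * c x) atTop (𝓝 (F x)) :=
    ae_of_all _ fun x => (hLn_tendsto (T x)).mul_const (c x)
  have hFn_integral : ∀ n : ℕ, ∫ x, Ln n (T x) * c x ∂μ = ∫ x, Ln n x ∂μ := by
    intro n
    have := key Set.univ MeasurableSet.univ n
    simpa using this
  have hF0 : 0 ≤ᵐ[μ] F := by
    filter_upwards [hc0] with x hx
    exact mul_nonneg (hL0 (T x)) hx
  have hFint : Integrable F μ := by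
    refine ⟨hFm, ?_⟩
    rw [hasFiniteIntegral_iff_ofReal hF0]
    have hmct : Tendsto (fun n => ∫⁻ x, ENNReal.ofReal (Ln n (T x) * c x) ∂μ) atTop
        (𝓝 (∫⁻ x, ENNReal.ofReal (F x) ∂μ)) := by
      refine lintegral_tendsto_of_tendsto_of_monotone
        (fun n => ((((hLn_meas n).comp hT).mul
          (hcsm.mono hm).measurable).ennreal_ofReal).aemeasurable) ?_ ?_
      · filter_upwards [hFn_mono] with x hx i j hij
        exact ENNReal.ofReal_le_ofReal (hx hij)
      · filter_upwards [hFn_tendsto] with x hx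
        exact (ENNReal.continuous_ofReal.tendsto _).comp hx
    have hbound : ∀ n : ℕ, ∫⁻ x, ENNReal.ofReal (Ln n (T x) * c x) ∂μ
        ≤ ENNReal.ofReal (∫ x, L x ∂μ) := by
      intro n
      rw [← ofReal_integral_eq_lintegral_ofReal (hFn_int n) (hFn_nonneg n)]
      refine ENNReal.ofReal_le_ofReal ?_
      rw [hFn_integral n]
      exact integral_mono (hLn_int n) hLint (hLn_le n)
    exact lt_of_le_of_lt (le_of_tendsto hmct (Eventually.of_forall hbound))
      ENNReal.ofReal_lt_top
  -- set integrals of F over comap-measurable sets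
  have hFset : ∀ (B : Set Ω), MeasurableSet B →
      ∫ x in T ⁻¹' B, F x ∂μ = ∫ x in T ⁻¹' B, (1 : ℝ) ∂μ := by
    intro B hB
    have h1 : Tendsto (fun n => ∫ x in T ⁻¹' B, Ln n (T x) * c x ∂μ) atTop
        (𝓝 (∫ x in T ⁻¹' B, F x ∂μ)) := by
      refine integral_tendsto_of_tendsto_of_monotone
        (fun n => (hFn_int n).integrableOn) hFint.integrableOn ?_ ?_
      · exact ae_restrict_of_ae hFn_mono
      · exact ae_restrict_of_ae hFn_tendsto
    have h2 : Tendsto (fun n => ∫ x in B, Ln n x ∂μ) atTop (𝓝 (∫ x in B, L x ∂μ)) := by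
      refine integral_tendsto_of_tendsto_of_monotone
        (fun n => (hLn_int n).integrableOn)
        hLint.integrableOn ?_ ?_
      · exact ae_restrict_of_ae (ae_of_all _ hLn_mono)
      · exact ae_restrict_of_ae (ae_of_all _ hLn_tendsto)
    have h12 : ∫ x in T ⁻¹' B, F x ∂μ = ∫ x in B, L x ∂μ := by
      refine tendsto_nhds_unique ?_ h2
      exact h1.congr fun n => key B hB n
    rw [h12, hL, Measure.setIntegral_toReal_rnDeriv hac B, setIntegral_const,
      smul_eq_mul, mul_one, map_measureReal_apply hT hB]
  -- conclude by uniqueness over the sub-σ-algebra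
  have hFsm : AEStronglyMeasurable[MeasurableSpace.comap T m] F μ := by
    refine ⟨F, ?_, EventuallyEq.rfl⟩
    exact ((hLmeas.comp hTcm).stronglyMeasurable).mul hcsm
  have : F =ᵐ[μ] fun _ => (1 : ℝ) := by
    refine ae_eq_of_forall_setIntegral_eq_of_sigmaFinite' hm
      (fun s _ _ => hFint.integrableOn) (fun s _ _ => (integrable_const 1).integrableOn)
      ?_ hFsm ⟨fun _ => 1, stronglyMeasurable_const, EventuallyEq.rfl⟩
    rintro s ⟨B, hB, rfl⟩ _
    exact hFset B hB
  exact this
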